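/- Takagi decomposition of symmetric bipartite pure states: (i) every nonzero vector ψ : Fin N × Fin N → ℂ with ψ(i,j) = ψ(j,i) for all i,j can be written as ψ(p,q) = ∑_t a_t(p)·a_t(q) for a finite family of vectors a_t ∈ ℂ^N that are pairwise orthogonal with respect to the standard Hermitian inner product; (ii) if moreover ψ is real valued, then ψ(p,q) = ∑_t ε_t·a_t(p)·a_t(q) where each ε_t ∈ {+1, −1} and the a_t are pairwise orthogonal real vectors in ℝ^N. -/

import Mathlib

open Matrix in
lemma conj_diag_entry {n : Type*} [Fintype n] [DecidableEq n]
    (U : Matrix n n ℝ) (d : n → ℝ) (i j : n) :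
    (U * Matrix.diagonal d * Uᴴ) i j = ∑ k, d k * (U i k * U j k) := by
  rw [Matrix.mul_apply]
  refine Finset.sum_congr rfl fun k _ => ?_
  simp [Matrix.mul_diagonal, Matrix.conjTranspose_apply]
  ring


open Matrix in
lemma spectral_entry {n : Type*} [Fintype n] [DecidableEq n]
    {A : Matrix n n ℝ} (hA : A.IsHermitian) (i j : n) :
    A i j = ∑ k, hA.eigenvalues k *
      (hA.eigenvectorUnitary.1 i k * hA.eigenvectorUnitary.1 j k) := by
  conv_lhs => rw [hA.spectral_theorem]
  rw [show Matrix.diagonal (RCLike.ofReal ∘ hA.eigenvalues) = Matrix.diagonal hA.eigenvalues by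
    simp [RCLike.ofReal_real_eq_id]]
  exact conj_diag_entry _ _ i j

lemma max_sum_split {n : Type*} [Fintype n] (lam w : n → ℝ) :
    ∑ k, max (lam k) 0 * w k = ((∑ k, lam k * w k) + ∑ k, |lam k| * w k) / 2 := by
  rw [← Finset.sum_add_distrib, Finset.sum_div]
  refine Finset.sum_congr rfl fun k _ => ?_
  rcases le_total 0 (lam k) with h | h
  · rw [abs_of_nonneg h, max_eq_left h]; ring
  · rw [abs_of_nonpos h, max_eq_right h]; ring

open Matrix Complex Sum in
lemma takagi_aux {N : ℕ} (ψ : Fin N × Fin N → ℂ)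
    (hsym : ∀ i j : Fin N, ψ (i, j) = ψ (j, i)) :
    ∃ a : (Fin N ⊕ Fin N) → Fin N → ℂ,
      (∀ s t, s ≠ t → ∑ p, star (a s p) * a t p = 0) ∧
      ∀ p q : Fin N, ψ (p, q) = ∑ t, a t p * a t q := by
  classical
  set X : Matrix (Fin N) (Fin N) ℝ := Matrix.of fun p q => (ψ (p,q)).re with hX
  set Y : Matrix (Fin N) (Fin N) ℝ := Matrix.of fun p q => (ψ (p,q)).im with hY
  set M : Matrix (Fin N ⊕ Fin N) (Fin N ⊕ Fin N) ℝ := fromBlocks X Y Y (-X) with hMdef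
  have hXs : Xᴴ = X := by
    ext i j; simp [X, conjTranspose_apply]; rw [hsym]
  have hYs : Yᴴ = Y := by
    ext i j; simp [Y, conjTranspose_apply]; rw [hsym]
  have hM : M.IsHermitian := by
    unfold Matrix.IsHermitian
    rw [hMdef, fromBlocks_conjTranspose, hXs, hYs, conjTranspose_neg, hXs]
  set U : Matrix (Fin N ⊕ Fin N) (Fin N ⊕ Fin N) ℝ := hM.eigenvectorUnitary.1 with hUdef
  set lam : (Fin N ⊕ Fin N) → ℝ := hM.eigenvalues with hlam
  have hUU : Uᴴ * U = 1 := by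
    rw [← Matrix.star_eq_conjTranspose]
    exact Matrix.UnitaryGroup.star_mul_self _
  set J : Matrix (Fin N ⊕ Fin N) (Fin N ⊕ Fin N) ℝ := fromBlocks 0 (-1) 1 0 with hJdef
  have hJM : J * M = -(M * J) := by
    rw [hJdef, hMdef, fromBlocks_multiply, fromBlocks_multiply]
    simp [Matrix.fromBlocks_neg]
  have hJH : Jᴴ = -J := by
    rw [hJdef, fromBlocks_conjTranspose]
    simp [Matrix.fromBlocks_neg]
  have hJJ : J * Jᴴ = 1 := by
    rw [hJH, hJdef, Matrix.mul_neg, fromBlocks_multiply]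
    simp [Matrix.fromBlocks_neg, ← Matrix.fromBlocks_one]
  have hJJ2 : Jᴴ * J = 1 := by
    rw [hJH, hJdef, Matrix.neg_mul, fromBlocks_multiply]
    simp [Matrix.fromBlocks_neg, ← Matrix.fromBlocks_one]
  -- spectral theorem over ℝ
  have hM2 : M = U * Matrix.diagonal lam * Uᴴ := by
    have := hM.spectral_theorem
    rw [show Matrix.diagonal (RCLike.ofReal ∘ hM.eigenvalues) = Matrix.diagonal lam by
      simp [RCLike.ofReal_real_eq_id, hlam], Unitary.conjStarAlgAut_apply] at this
    simpa only [Unitary.coe_star, Matrix.star_eq_conjTranspose] using this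
  -- generic product of two conjugated diagonals
  have mulconj : ∀ d e : (Fin N ⊕ Fin N) → ℝ,
      (U * Matrix.diagonal d * Uᴴ) * (U * Matrix.diagonal e * Uᴴ)
        = U * Matrix.diagonal (fun k => d k * e k) * Uᴴ := by
    intro d e
    calc (U * Matrix.diagonal d * Uᴴ) * (U * Matrix.diagonal e * Uᴴ)
        = U * (Matrix.diagonal d * ((Uᴴ * U) * (Matrix.diagonal e * Uᴴ))) := by
          simp only [Matrix.mul_assoc]
      _ = U * (Matrix.diagonal d * Matrix.diagonal e) * Uᴴ := by
          rw [hUU, Matrix.one_mul]; simp only [Matrix.mul_assoc]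
      _ = U * Matrix.diagonal (fun k => d k * e k) * Uᴴ := by
          rw [Matrix.diagonal_mul_diagonal]
  set AbsM : Matrix (Fin N ⊕ Fin N) (Fin N ⊕ Fin N) ℝ :=
    U * Matrix.diagonal (fun k => |lam k|) * Uᴴ with hAdef
  have hAbs : AbsM.PosSemidef :=
    (Matrix.posSemidef_diagonal_iff.mpr fun k => abs_nonneg (lam k)).mul_mul_conjTranspose_same U
  have hAbsSq : AbsM ^ 2 = M ^ 2 := by
    rw [hM2, pow_two, pow_two, hAdef, mulconj, mulconj,
      show (fun k => |lam k| * |lam k|) = fun k => lam k * lam k from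
        funext fun k => abs_mul_abs_self _]
  have hBpsd : (J * AbsM * Jᴴ).PosSemidef := hAbs.mul_mul_conjTranspose_same J
  have hJM2 : J * M ^ 2 = M ^ 2 * J := by
    rw [pow_two]
    calc J * (M * M) = (J * M) * M := by rw [Matrix.mul_assoc]
      _ = -(M * J) * M := by rw [hJM]
      _ = -(M * (J * M)) := by simp only [Matrix.neg_mul, Matrix.mul_assoc]
      _ = -(M * -(M * J)) := by rw [hJM]
      _ = M * M * J := by simp only [Matrix.mul_neg, neg_neg, Matrix.mul_assoc]
  have hBSq : (J * AbsM * Jᴴ) ^ 2 = M ^ 2 := by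
    rw [pow_two]
    calc (J * AbsM * Jᴴ) * (J * AbsM * Jᴴ)
        = J * (AbsM * ((Jᴴ * J) * (AbsM * Jᴴ))) := by simp only [Matrix.mul_assoc]
      _ = J * (AbsM * AbsM) * Jᴴ := by rw [hJJ2, Matrix.one_mul]; simp only [Matrix.mul_assoc]
      _ = J * (M ^ 2) * Jᴴ := by rw [← pow_two, hAbsSq]
      _ = M ^ 2 * (J * Jᴴ) := by rw [hJM2]; simp only [Matrix.mul_assoc]
      _ = M ^ 2 := by rw [hJJ, Matrix.mul_one]
  have hBeq : J * AbsM * Jᴴ = AbsM := (open scoped MatrixOrder in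
    (CFC.sq_eq_sq_iff _ _ hBpsd.nonneg hAbs.nonneg).1 (by rw [hBSq, hAbsSq]))
  have hJA : J * AbsM = AbsM * J := by
    have h2 := congrArg (· * J) hBeq
    simpa only [Matrix.mul_assoc, hJJ2, Matrix.mul_one] using h2
  -- K and eigenvalue commutation
  have hKD : (Uᴴ * J * U) * Matrix.diagonal lam = -(Matrix.diagonal lam * (Uᴴ * J * U)) := by
    have h1 : Uᴴ * (J * M) * U = (Uᴴ * J * U) * Matrix.diagonal lam := by
      calc Uᴴ * (J * M) * U = Uᴴ * (J * (U * Matrix.diagonal lam * Uᴴ)) * U := by rw [← hM2]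
        _ = Uᴴ * (J * (U * (Matrix.diagonal lam * (Uᴴ * U)))) := by simp only [Matrix.mul_assoc]
        _ = (Uᴴ * J * U) * Matrix.diagonal lam := by
            rw [hUU, Matrix.mul_one]; simp only [Matrix.mul_assoc]
    have h2 : Uᴴ * (M * J) * U = Matrix.diagonal lam * (Uᴴ * J * U) := by
      calc Uᴴ * (M * J) * U = Uᴴ * ((U * Matrix.diagonal lam * Uᴴ) * J) * U := by rw [← hM2]
        _ = (Uᴴ * U) * (Matrix.diagonal lam * (Uᴴ * (J * U))) := by simp only [Matrix.mul_assoc]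
        _ = Matrix.diagonal lam * (Uᴴ * J * U) := by
            rw [hUU, Matrix.one_mul]; simp only [Matrix.mul_assoc]
    calc (Uᴴ * J * U) * Matrix.diagonal lam = Uᴴ * (J * M) * U := h1.symm
      _ = -(Uᴴ * (M * J) * U) := by rw [hJM]; simp [Matrix.mul_neg, Matrix.neg_mul]
      _ = -(Matrix.diagonal lam * (Uᴴ * J * U)) := by rw [h2]
  have hK0 : ∀ s t, 0 < lam s → 0 < lam t → (Uᴴ * J * U) s t = 0 := by
    intro s t hs ht
    have h := Matrix.ext_iff.2 hKD s t
    rw [Matrix.mul_diagonal, Matrix.neg_apply, Matrix.diagonal_mul] at h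
    have h2 : (Uᴴ * J * U) s t * (lam t + lam s) = 0 := by ring_nf; linarith [h]
    rcases mul_eq_zero.1 h2 with h3 | h3
    · exact h3
    · exact absurd h3 (by positivity)
  -- entrywise multiplication by J
  have hJmulL : ∀ (P : Matrix (Fin N ⊕ Fin N) (Fin N ⊕ Fin N) ℝ) p j,
      (J * P) (inl p) j = -P (inr p) j := by
    intro P p j
    simp [hJdef, Matrix.mul_apply, Fintype.sum_sum_type, Matrix.one_apply]
  have hJmulR : ∀ (P : Matrix (Fin N ⊕ Fin N) (Fin N ⊕ Fin N) ℝ) p j,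
      (J * P) (inr p) j = P (inl p) j := by
    intro P p j
    simp [hJdef, Matrix.mul_apply, Fintype.sum_sum_type, Matrix.one_apply]
  have hmulJL : ∀ (P : Matrix (Fin N ⊕ Fin N) (Fin N ⊕ Fin N) ℝ) i q,
      (P * J) i (inl q) = P i (inr q) := by
    intro P i q
    simp [hJdef, Matrix.mul_apply, Fintype.sum_sum_type, Matrix.one_apply]
  have hmulJR : ∀ (P : Matrix (Fin N ⊕ Fin N) (Fin N ⊕ Fin N) ℝ) i q,
      (P * J) i (inr q) = -P i (inl q) := by
    intro P i q
    simp [hJdef, Matrix.mul_apply, Fintype.sum_sum_type, Matrix.one_apply]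
  -- AbsM block symmetries
  have hA11 : ∀ p q, AbsM (inl p) (inl q) = AbsM (inr p) (inr q) := by
    intro p q
    have e := Matrix.ext_iff.2 hJA (inl p) (inr q)
    rw [hJmulL, hmulJR] at e
    linarith
  have hA12 : ∀ p q, AbsM (inl p) (inr q) = -AbsM (inr p) (inl q) := by
    intro p q
    have e := Matrix.ext_iff.2 hJA (inl p) (inl q)
    rw [hJmulL, hmulJL] at e
    linarith
  -- entrywise spectral sums
  have hMent : ∀ i j, M i j = ∑ k, lam k * (U i k * U j k) := by
    intro i j
    conv_lhs => rw [hM2]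
    exact conj_diag_entry U lam i j
  have hAent : ∀ i j, AbsM i j = ∑ k, |lam k| * (U i k * U j k) := by
    intro i j
    rw [hAdef]
    exact conj_diag_entry U _ i j
  -- orthonormality of columns
  have hUUent : ∀ s t, s ≠ t → ∑ i, U i s * U i t = 0 := by
    intro s t hst
    have e := Matrix.ext_iff.2 hUU s t
    rw [Matrix.mul_apply] at e
    simp only [Matrix.conjTranspose_apply, star_trivial] at e
    rw [e, Matrix.one_apply_ne hst]
  -- entry formula for K
  have hKent : ∀ s t, (Uᴴ * J * U) s t
      = ∑ p, (U (inr p) s * U (inl p) t - U (inl p) s * U (inr p) t) := by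
    intro s t
    rw [Matrix.mul_assoc, Matrix.mul_apply]
    simp only [Matrix.conjTranspose_apply, star_trivial]
    rw [Fintype.sum_sum_type, ← Finset.sum_add_distrib]
    refine Finset.sum_congr rfl fun p _ => ?_
    rw [hJmulL, hJmulR]
    ring
  -- the vectors
  set u : (Fin N ⊕ Fin N) → Fin N → ℝ := fun k p => U (inl p) k with hu
  set v : (Fin N ⊕ Fin N) → Fin N → ℝ := fun k p => U (inr p) k with hv
  set c : (Fin N ⊕ Fin N) → ℝ := fun k => Real.sqrt (max (lam k) 0) with hc
  have hcc : ∀ k, c k * c k = max (lam k) 0 := fun k => Real.mul_self_sqrt (le_max_right _ _)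
  set F : (Fin N ⊕ Fin N) → Fin N → ℂ :=
    fun k p => ((c k * u k p : ℝ) : ℂ) + ((c k * v k p : ℝ) : ℂ) * Complex.I with hF
  refine ⟨F, ?_, ?_⟩
  · -- orthogonality
    intro s t hst
    by_cases hs : lam s ≤ 0
    · have : c s = 0 := by rw [hc]; simp [max_eq_right hs]
      simp [hF, this]
    by_cases ht : lam t ≤ 0
    · have : c t = 0 := by rw [hc]; simp [max_eq_right ht]
      simp [hF, this]
    push_neg at hs ht
    -- real identities
    have h1 : ∑ p, (u s p * u t p + v s p * v t p) = 0 := by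
      have h1' := hUUent s t hst
      rw [Fintype.sum_sum_type] at h1'
      rw [Finset.sum_add_distrib]
      exact h1'
    have h2 : ∑ p, (u s p * v t p - v s p * u t p) = 0 := by
      have hk : ∑ p, (v s p * u t p - u s p * v t p) = 0 := by
        rw [← hKent s t]; exact hK0 s t hs ht
      have h3 : ∑ p, (u s p * v t p - v s p * u t p)
          = -∑ p, (v s p * u t p - u s p * v t p) := by
        calc ∑ p, (u s p * v t p - v s p * u t p)
            = ∑ p, -(v s p * u t p - u s p * v t p) :=
              Finset.sum_congr rfl fun p _ => by ring
          _ = -∑ p, (v s p * u t p - u s p * v t p) := Finset.sum_neg_distrib _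
      rw [h3, hk, neg_zero]
    have hterm : ∀ p, star (F s p) * F t p
        = (((c s * c t) * (u s p * u t p + v s p * v t p) : ℝ) : ℂ)
          + (((c s * c t) * (u s p * v t p - v s p * u t p) : ℝ) : ℂ) * Complex.I := by
      intro p
      rw [hF]
      apply Complex.ext <;>
        simp only [Complex.star_def, map_add, _root_.map_mul, Complex.conj_ofReal,
          Complex.conj_I, Complex.mul_re, Complex.mul_im, Complex.add_re, Complex.add_im,
          Complex.ofReal_re, Complex.ofReal_im, Complex.I_re, Complex.I_im,
          Complex.neg_re, Complex.neg_im, Complex.ofReal_mul] <;>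
        ring
    calc ∑ p, star (F s p) * F t p
        = ∑ p, ((((c s * c t) * (u s p * u t p + v s p * v t p) : ℝ) : ℂ)
            + (((c s * c t) * (u s p * v t p - v s p * u t p) : ℝ) : ℂ) * Complex.I) :=
          Finset.sum_congr rfl fun p _ => hterm p
      _ = (((c s * c t) * ∑ p, (u s p * u t p + v s p * v t p) : ℝ) : ℂ)
            + (((c s * c t) * ∑ p, (u s p * v t p - v s p * u t p) : ℝ) : ℂ) * Complex.I := by
          rw [Finset.sum_add_distrib, ← Finset.sum_mul, Finset.mul_sum, Finset.mul_sum]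
          push_cast
          ring
      _ = 0 := by rw [h1, h2]; simp
  · -- decomposition
    intro p q
    have hterm : ∀ k, F k p * F k q
        = ((max (lam k) 0 * (u k p * u k q - v k p * v k q) : ℝ) : ℂ)
          + ((max (lam k) 0 * (u k p * v k q + v k p * u k q) : ℝ) : ℂ) * Complex.I := by
      intro k
      rw [hF, ← hcc k]
      apply Complex.ext <;>
        simp only [Complex.mul_re, Complex.mul_im, Complex.add_re, Complex.add_im,
          Complex.ofReal_re, Complex.ofReal_im, Complex.I_re, Complex.I_im,
          Complex.ofReal_mul] <;>
        ring
    have hre : ∑ k, max (lam k) 0 * (u k p * u k q - v k p * v k q) = (ψ (p, q)).re := by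
      rw [max_sum_split]
      have e1 : ∑ k, lam k * (u k p * u k q - v k p * v k q)
          = M (inl p) (inl q) - M (inr p) (inr q) := by
        rw [hMent, hMent, ← Finset.sum_sub_distrib]
        exact Finset.sum_congr rfl fun k _ => by rw [hu, hv]; ring
      have e2 : ∑ k, |lam k| * (u k p * u k q - v k p * v k q)
          = AbsM (inl p) (inl q) - AbsM (inr p) (inr q) := by
        rw [hAent, hAent, ← Finset.sum_sub_distrib]
        exact Finset.sum_congr rfl fun k _ => by rw [hu, hv]; ring
      rw [e1, e2, hA11]
      have m11 : M (inl p) (inl q) = (ψ (p, q)).re := by rw [hMdef]; simp [hX]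
      have m22 : M (inr p) (inr q) = -(ψ (p, q)).re := by rw [hMdef]; simp [hX]
      rw [m11, m22]
      ring
    have him : ∑ k, max (lam k) 0 * (u k p * v k q + v k p * u k q) = (ψ (p, q)).im := by
      rw [max_sum_split]
      have e1 : ∑ k, lam k * (u k p * v k q + v k p * u k q)
          = M (inl p) (inr q) + M (inr p) (inl q) := by
        rw [hMent, hMent, ← Finset.sum_add_distrib]
        exact Finset.sum_congr rfl fun k _ => by rw [hu, hv]; ring
      have e2 : ∑ k, |lam k| * (u k p * v k q + v k p * u k q)
          = AbsM (inl p) (inr q) + AbsM (inr p) (inl q) := by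
        rw [hAent, hAent, ← Finset.sum_add_distrib]
        exact Finset.sum_congr rfl fun k _ => by rw [hu, hv]; ring
      rw [e1, e2, hA12]
      have m12 : M (inl p) (inr q) = (ψ (p, q)).im := by rw [hMdef]; simp [hY]
      have m21 : M (inr p) (inl q) = (ψ (p, q)).im := by rw [hMdef]; simp [hY]
      rw [m12, m21]
      ring
    calc ψ (p, q) = ((ψ (p, q)).re : ℂ) + ((ψ (p, q)).im : ℂ) * Complex.I :=
          (Complex.re_add_im _).symm
      _ = ∑ k, F k p * F k q := by
          rw [← hre, ← him]
          rw [Finset.sum_congr rfl fun k _ => hterm k, Finset.sum_add_distrib,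
            ← Finset.sum_mul]
          push_cast
          ring

open Matrix Complex in
lemma real_spectral_aux {N : ℕ} (ψ : Fin N × Fin N → ℂ)
    (hsym : ∀ i j : Fin N, ψ (i, j) = ψ (j, i)) (him : ∀ p, (ψ p).im = 0) :
    ∃ (ε : Fin N → ℝ) (a : Fin N → Fin N → ℝ),
      (∀ t, ε t = 1 ∨ ε t = -1) ∧
      (∀ s t, s ≠ t → ∑ p, a s p * a t p = 0) ∧
      ∀ p q : Fin N, ψ (p, q) = ((∑ t, ε t * (a t p * a t q) : ℝ) : ℂ) := by
  classical
  set R : Matrix (Fin N) (Fin N) ℝ := Matrix.of fun p q => (ψ (p,q)).re with hRdef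
  have hR : R.IsHermitian := by
    apply Matrix.IsHermitian.ext
    intro i j
    simp only [hRdef, Matrix.of_apply, star_trivial]
    rw [hsym]
  set U : Matrix (Fin N) (Fin N) ℝ := hR.eigenvectorUnitary.1 with hUdef
  set lam : Fin N → ℝ := hR.eigenvalues with hlam
  have hUU : Uᴴ * U = 1 := by
    rw [← Matrix.star_eq_conjTranspose]
    exact Matrix.UnitaryGroup.star_mul_self _
  have hUUent : ∀ s t : Fin N, s ≠ t → ∑ i, U i s * U i t = 0 := by
    intro s t hst
    have e := Matrix.ext_iff.2 hUU s t
    rw [Matrix.mul_apply] at e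
    simp only [Matrix.conjTranspose_apply, star_trivial] at e
    rw [e, Matrix.one_apply_ne hst]
  have hRent : ∀ p q, R p q = ∑ k, lam k * (U p k * U q k) := fun p q => spectral_entry hR p q
  refine ⟨fun t => if 0 ≤ lam t then (1:ℝ) else -1,
    fun t p => Real.sqrt |lam t| * U p t, ?_, ?_, ?_⟩
  · intro t
    by_cases h : 0 ≤ lam t
    · left; simp [h]
    · right; simp [h]
  · intro s t hst
    have : ∑ p, (Real.sqrt |lam s| * U p s) * (Real.sqrt |lam t| * U p t)
        = (Real.sqrt |lam s| * Real.sqrt |lam t|) * ∑ p, U p s * U p t := by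
      rw [Finset.mul_sum]
      exact Finset.sum_congr rfl fun p _ => by ring
    rw [this, hUUent s t hst, mul_zero]
  · intro p q
    have key : ∑ t, (if 0 ≤ lam t then (1:ℝ) else -1)
        * ((Real.sqrt |lam t| * U p t) * (Real.sqrt |lam t| * U q t)) = R p q := by
      rw [hRent]
      refine Finset.sum_congr rfl fun t _ => ?_
      have hss : Real.sqrt |lam t| * Real.sqrt |lam t| = |lam t| :=
        Real.mul_self_sqrt (abs_nonneg _)
      by_cases h : 0 ≤ lam t
      · rw [if_pos h]
        have h1 : |lam t| = lam t := abs_of_nonneg h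
        linear_combination (U p t * U q t) * hss + (U p t * U q t) * h1
      · rw [if_neg h]
        have h1 : |lam t| = -lam t := abs_of_neg (lt_of_not_ge h)
        linear_combination (-(U p t * U q t)) * hss + (-(U p t * U q t)) * h1
    rw [key]
    apply Complex.ext
    · simp [hRdef]
    · simp [him (p, q)]


/-- Takagi decomposition of symmetric bipartite pure states: (i) every nonzero symmetric
`ψ` is a sum `ψ(p,q) = ∑ t, a_t(p)·a_t(q)` with pairwise orthogonal `a_t ∈ ℂ^N`;
(ii) if moreover `ψ` is real valued then `ψ(p,q) = ∑ t, ε_t·a_t(p)·a_t(q)` with signs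
`ε_t ∈ {±1}` and pairwise orthogonal real vectors `a_t ∈ ℝ^N`. -/
theorem stmt_12 {N : ℕ} (ψ : Fin N × Fin N → ℂ) (hne : ψ ≠ 0)
    (hsym : ∀ i j : Fin N, ψ (i, j) = ψ (j, i)) :
    (∃ (m : ℕ) (a : Fin m → Fin N → ℂ),
      (∀ s t, s ≠ t → ∑ p, star (a s p) * a t p = 0) ∧
      ∀ p q : Fin N, ψ (p, q) = ∑ t, a t p * a t q) ∧
    ((∀ p, (ψ p).im = 0) →
      ∃ (m : ℕ) (ε : Fin m → ℝ) (a : Fin m → Fin N → ℝ),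
        (∀ t, ε t = 1 ∨ ε t = -1) ∧
        (∀ s t, s ≠ t → ∑ p, a s p * a t p = 0) ∧
        ∀ p q : Fin N, ψ (p, q) = ((∑ t, ε t * (a t p * a t q) : ℝ) : ℂ)) := by
  constructor
  · obtain ⟨a, ho, hd⟩ := takagi_aux ψ hsym
    refine ⟨N + N, fun t => a (finSumFinEquiv.symm t), ?_, ?_⟩
    · intro s t hst
      exact ho _ _ fun h => hst (finSumFinEquiv.symm.injective h)
    · intro p q
      rw [hd p q]
      exact (Equiv.sum_comp finSumFinEquiv.symm (fun k => a k p * a k q)).symm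
  · intro him
    obtain ⟨ε, a, h1, h2, h3⟩ := real_spectral_aux ψ hsym him
    exact ⟨N, ε, a, h1, h2, h3⟩
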